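/- Expected squared distance between the BaR-learner and full-data OLS coefficients: under a Bernoulli(1/2) design with imputed residuals R̂(X_j,Y_j) = e_j·R̂(X_j,Y_j,1) + (1−e_j)·R̂(X_j,Y_j,0) where R̂(x,y,z) = [y − μ̂(x)]/(z − 1/2) and e_j = P(Z_j = 1 | X_j, Y_j), and coefficient vectors β̂_I = (XᵀX)^{−1}[Σ_{i∈I} X_i R̂_i + Σ_{j∉I} X_j R̂(X_j,Y_j)] and β̂_{[n]} = (XᵀX)^{−1}Σ_{i=1}^n X_i R̂_i with R̂_i = [Y_i − μ̂(X_i)]/(Z_i − 1/2), it holds that E[‖β̂_I − β̂_{[n]}‖² | X_{[n]}, Y_{[n]}] = 4·Σ_{j∉I} X_jᵀ(XᵀX)^{−2}X_j · [Y_j − μ̂(X_j)]² · (1 − C_j²), where C_j = |2e_j − 1|. -/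
import Mathlib
open Matrix Finset

private lemma sum_prod_bool' (n:ℕ) (q : Fin n → Bool → ℝ) :
    ∑ z : Fin n → Bool, ∏ i, q i (z i) = ∏ i, (q i false + q i true) := by
  have := Finset.prod_univ_sum (t := fun _ : Fin n => (Finset.univ : Finset Bool))
    (f := fun i b => q i b)
  rw [Fintype.piFinset_univ] at this
  rw [← this]
  simp [add_comm]

private lemma exp_one' (n : ℕ) (p : Fin n → Bool → ℝ) (hp : ∀ i, p i false + p i true = 1)
    (j : Fin n) (f : Bool → ℝ) :
    ∑ z : Fin n → Bool, (∏ i, p i (z i)) * f (z j)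
      = p j false * f false + p j true * f true := by
  have h1 : ∀ z : Fin n → Bool, (∏ i, p i (z i)) * f (z j)
      = ∏ i, (p i (z i) * if i = j then f (z i) else 1) := by
    intro z
    rw [Finset.prod_mul_distrib, Finset.prod_ite_eq']
    simp
  simp_rw [h1]
  rw [sum_prod_bool' n (fun i b => p i b * if i = j then f b else 1)]
  have h2 : ∀ i : Fin n, (p i false * (if i = j then f false else 1)
      + p i true * (if i = j then f true else 1))
      = if i = j then p i false * f false + p i true * f true else 1 := by
    intro i
    by_cases h : i = j <;> simp [h, hp i]
  simp_rw [h2]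
  rw [Finset.prod_ite_eq']
  simp

private lemma exp_two' (n : ℕ) (p : Fin n → Bool → ℝ) (hp : ∀ i, p i false + p i true = 1)
    (j j' : Fin n) (hne : j ≠ j') (f g : Bool → ℝ) :
    ∑ z : Fin n → Bool, (∏ i, p i (z i)) * (f (z j) * g (z j'))
      = (p j false * f false + p j true * f true)
        * (p j' false * g false + p j' true * g true) := by
  have h1 : ∀ z : Fin n → Bool, (∏ i, p i (z i)) * (f (z j) * g (z j'))
      = ∏ i, (p i (z i) * (if i = j then f (z i) else 1) * (if i = j' then g (z i) else 1)) := by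
    intro z
    rw [Finset.prod_mul_distrib, Finset.prod_mul_distrib, Finset.prod_ite_eq',
      Finset.prod_ite_eq']
    simp [mul_assoc]
  simp_rw [h1]
  rw [sum_prod_bool' n (fun i b => p i b * (if i = j then f b else 1) * (if i = j' then g b else 1))]
  have h2 : ∀ i : Fin n,
      (p i false * (if i = j then f false else 1) * (if i = j' then g false else 1)
      + p i true * (if i = j then f true else 1) * (if i = j' then g true else 1))
      = (if i = j then p i false * f false + p i true * f true else 1)
        * (if i = j' then p i false * g false + p i true * g true else 1) := by
    intro i
    by_cases h : i = j
    · subst h; simp [hne, hp i]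
    · by_cases h' : i = j' <;> simp [h, h', hp i, Ne.symm hne]
  simp_rw [h2]
  rw [Finset.prod_mul_distrib, Finset.prod_ite_eq', Finset.prod_ite_eq']
  simp

/-- Expected squared distance between the BaR-learner coefficient `β̂_I`
(imputed residuals outside `I`) and the full-data OLS coefficient `β̂_{[n]}`,
conditionally on covariates and outcomes, under independent assignments
`Z_j ~ Bernoulli(e_j)`:
`E[‖β̂_I − β̂_{[n]}‖²] = 4 ∑_{j∉I} X_jᵀ(XᵀX)⁻²X_j · D_j² · (1 − C_j²)`. -/
theorem stmt_13 (n d : ℕ) (X : Matrix (Fin n) (Fin d) ℝ) (Y muhat : Fin n → ℝ)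
    (e : Fin n → ℝ) (he : ∀ j, e j ∈ Set.Icc (0 : ℝ) 1)
    (I : Finset (Fin n)) (hX : IsUnit (X.transpose * X).det) :
    let D : Fin n → ℝ := fun j => Y j - muhat j
    let Rhat : Fin n → Bool → ℝ := fun j z => D j / ((if z then (1 : ℝ) else 0) - 1 / 2)
    let Rbar : Fin n → ℝ := fun j => e j * Rhat j true + (1 - e j) * Rhat j false
    let G := (X.transpose * X)⁻¹
    let betaI : (Fin n → Bool) → (Fin d → ℝ) := fun z =>
      G.mulVec (fun k => ∑ i ∈ I, X i k * Rhat i (z i) + ∑ j ∈ Iᶜ, X j k * Rbar j)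
    let betaFull : (Fin n → Bool) → (Fin d → ℝ) := fun z =>
      G.mulVec (fun k => ∑ i, X i k * Rhat i (z i))
    ∑ z : Fin n → Bool, (∏ j, (if z j then e j else 1 - e j)) *
        (∑ k, (betaI z k - betaFull z k) ^ 2)
      = 4 * ∑ j ∈ Iᶜ, (∑ k, ∑ l, X j k * (G * G) k l * X j l)
          * (D j) ^ 2 * (1 - (2 * e j - 1) ^ 2) := by
  intro D Rhat Rbar G betaI betaFull
  set p : Fin n → Bool → ℝ := fun i b => if b then e i else 1 - e i with hpdef
  have hp : ∀ i, p i false + p i true = 1 := by intro i; simp [p]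
  set W : Fin n → Bool → ℝ := fun j b => Rbar j - Rhat j b with hWdef
  set c : Fin n → Fin d → ℝ := fun j k => ∑ l, G k l * X j l with hcdef
  have hWf : ∀ j, W j false = 4 * e j * D j := by
    intro j; simp only [W, Rbar, Rhat]; norm_num; ring
  have hWt : ∀ j, W j true = 4 * (e j - 1) * D j := by
    intro j; simp only [W, Rbar, Rhat]; norm_num; ring
  have hE0 : ∀ j, p j false * W j false + p j true * W j true = 0 := by
    intro j; rw [hWf, hWt]; simp [p]; ring
  have hdiff : ∀ (z : Fin n → Bool) (k : Fin d),
      betaI z k - betaFull z k = ∑ j ∈ Iᶜ, c j k * W j (z j) := by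
    intro z k
    simp only [betaI, betaFull, mulVec, dotProduct]
    rw [← Finset.sum_sub_distrib]
    have h1 : ∀ l : Fin d,
        G k l * (∑ i ∈ I, X i l * Rhat i (z i) + ∑ j ∈ Iᶜ, X j l * Rbar j)
          - G k l * (∑ i, X i l * Rhat i (z i))
        = ∑ j ∈ Iᶜ, G k l * (X j l * W j (z j)) := by
      intro l
      rw [← Finset.sum_add_sum_compl I (fun i => X i l * Rhat i (z i)), ← mul_sub,
        add_sub_add_left_eq_sub, ← Finset.sum_sub_distrib, Finset.mul_sum]
      apply Finset.sum_congr rfl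
      intro j _
      simp only [W]; ring
    simp_rw [h1]
    rw [Finset.sum_comm]
    apply Finset.sum_congr rfl
    intro j _
    simp only [c, Finset.sum_mul]
    apply Finset.sum_congr rfl
    intro l _
    ring
  have hsq : ∀ z : Fin n → Bool,
      ∑ k, (betaI z k - betaFull z k) ^ 2
        = ∑ j ∈ Iᶜ, ∑ j' ∈ Iᶜ, (∑ k, c j k * c j' k) * (W j (z j) * W j' (z j')) := by
    intro z
    simp_rw [hdiff, sq, Finset.sum_mul_sum]
    rw [Finset.sum_comm]
    apply Finset.sum_congr rfl
    intro j _
    rw [Finset.sum_comm]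
    apply Finset.sum_congr rfl
    intro j' _
    rw [Finset.sum_mul]
    apply Finset.sum_congr rfl
    intro k _
    ring
  have key : ∑ z : Fin n → Bool, (∏ j, (if z j then e j else 1 - e j)) *
        (∑ k, (betaI z k - betaFull z k) ^ 2)
      = ∑ j ∈ Iᶜ, (∑ k, c j k * c j k)
          * (p j false * (W j false * W j false) + p j true * (W j true * W j true)) := by
    simp_rw [hsq, Finset.mul_sum]
    rw [Finset.sum_comm]
    apply Finset.sum_congr rfl
    intro j hj
    rw [Finset.sum_comm]
    have hstep : ∀ j' ∈ Iᶜ,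
        (∑ z : Fin n → Bool, (∏ i, (if z i then e i else 1 - e i)) *
          ((∑ k, c j k * c j' k) * (W j (z j) * W j' (z j'))))
        = (∑ k, c j k * c j' k) *
          ∑ z : Fin n → Bool, (∏ i, p i (z i)) * (W j (z j) * W j' (z j')) := by
      intro j' _
      rw [Finset.mul_sum]
      apply Finset.sum_congr rfl
      intro z _
      simp only [p]; ring
    rw [Finset.sum_congr rfl hstep]
    rw [Finset.sum_eq_single j]
    · rw [exp_one' n p hp j (fun b => W j b * W j b)]
    · intro j' _ hne
      rw [exp_two' n p hp j j' (Ne.symm hne) (W j) (W j'), hE0 j]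
      ring
    · intro h; exact absurd hj h
  rw [key, Finset.mul_sum]
  apply Finset.sum_congr rfl
  intro j _
  have hGmat : Gᵀ = G := by
    show ((Xᵀ * X)⁻¹)ᵀ = (Xᵀ * X)⁻¹
    rw [Matrix.transpose_nonsing_inv, Matrix.transpose_mul, Matrix.transpose_transpose]
  have hquad : ∑ k, ∑ l, X j k * (G * G) k l * X j l = ∑ k, c j k * c j k := by
    have h2 : ∑ k, c j k * c j k
        = (G.mulVec fun l => X j l) ⬝ᵥ (G.mulVec fun l => X j l) := by
      simp [dotProduct, mulVec, c]
    rw [h2, Matrix.dotProduct_mulVec, ← Matrix.mulVec_transpose, hGmat,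
      Matrix.mulVec_mulVec]
    simp only [dotProduct, mulVec, Finset.sum_mul]
    apply Finset.sum_congr rfl
    intro k _
    apply Finset.sum_congr rfl
    intro l _
    ring
  rw [← hquad, hWf, hWt]
  simp only [p]
  norm_num
  ring
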